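/- Let i ∈ ℂ be a square root of −1. The 12×7 complex matrix A(i, i, i, i, −1, −1, −1) has rank exactly 5. Consequently the point t = (i, i, i, i, −1, −1, −1, −1), which lies on the translated torus C = {(t, −t⁻¹, −t⁻¹, t, t², −1, t⁻², −1) : t ∈ ℂ*} (take t = i), belongs to the first characteristic variety V₁(D) but not to the second characteristic variety V₂(D); equivalently, the rank-1 local system on the complement of D corresponding to this point has first cohomology of dimension exactly 1. -/

import Mathlib

open Matrix

/-- The Alexander matrix of the fundamental group of the complement of the
deconed deleted B₃ arrangement, evaluated at `(t₁, …, t₇)`. -/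
noncomputable def alexD (t₁ t₂ t₃ t₄ t₅ t₆ t₇ : ℂ) : Matrix (Fin 12) (Fin 7) ℂ :=
  !![1 - t₅, 0, 0, 0, t₁ - 1, 0, 0;
     0, t₅ * (t₃ - 1), 1 - t₂ * t₅, 0, t₃ - 1, 0, 0;
     0, 1 - t₅, t₂ * (1 - t₅), 0, t₂ * t₃ - 1, 0, 0;
     0, 0, 0, 1 - t₅, t₄ - 1, 0, 0;
     t₆ * (t₃ - 1), (t₃ - 1) * (t₁ * t₆ - 1), t₂ * (1 - t₁ * t₆), 0, 0, t₃ - 1, 0;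
     1 - t₆, t₁ * (t₃ - 1) * (t₆ - 1), t₁ * t₂ * (1 - t₆), 0, 0, t₁ * t₃ - 1, 0;
     0, t₆ * (t₄ - 1), 0, 1 - t₂ * t₆, 0, t₄ - 1, 0;
     0, 1 - t₆, 0, t₂ * (1 - t₆), 0, t₂ * t₄ - 1, 0;
     t₇ * (t₄ - 1), (t₄ - 1) * (t₁ * t₇ - 1), 0, t₂ * (1 - t₁ * t₇), 0, 0, t₄ - 1;
     1 - t₇, t₁ * (1 - t₇), 0, t₁ * t₂ * (1 - t₇), 0, 0, t₁ * t₂ * t₄ - 1;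
     0, 1 - t₇, 0, 0, 0, 0, t₂ - 1;
     0, 0, 1 - t₇, (t₃ - 1) * (1 - t₇), 0, 0, t₄ * (t₃ - 1)]

/-- The `d`-th characteristic variety of the deleted B₃ arrangement `D`:
points `x` of the algebraic torus `(ℂ*)⁸` such that `(x₁,…,x₇) ∈ V_d(D*)`,
i.e. `rank A(x₁,…,x₇) < 7 - d`, and `x₁x₂⋯x₈ = 1`. -/
noncomputable def VD (d : ℕ) : Set (Fin 8 → ℂ) :=
  {x | (∀ i, x i ≠ 0) ∧
       (alexD (x 0) (x 1) (x 2) (x 3) (x 4) (x 5) (x 6)).rank < 7 - d ∧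
       x 0 * x 1 * x 2 * x 3 * x 4 * x 5 * x 6 * x 7 = 1}


noncomputable def Lmat (i : ℂ) : Matrix (Fin 5) (Fin 12) ℂ :=
  !![((1/4:ℂ) + (1/4:ℂ)*i), ((-1/2:ℂ) + (-1/2:ℂ)*i), (0:ℂ), ((1/4:ℂ) + (1/4:ℂ)*i), ((1/2:ℂ) + (-1/2:ℂ)*i), (0:ℂ), (0:ℂ), (0:ℂ), ((1/2:ℂ)*i), (0:ℂ), (0:ℂ), (0:ℂ);
     ((-1/4:ℂ) + (1/4:ℂ)*i), (0:ℂ), (0:ℂ), ((1/4:ℂ) + (-1/4:ℂ)*i), (0:ℂ), (0:ℂ), (0:ℂ), (0:ℂ), ((1/2:ℂ)), (0:ℂ), (0:ℂ), (0:ℂ);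
     ((-1/4:ℂ) + (1/4:ℂ)*i), ((-1/2:ℂ) + (-1/2:ℂ)*i), (0:ℂ), ((3/4:ℂ) + (1/4:ℂ)*i), ((-1:ℂ)*i), (0:ℂ), (0:ℂ), (0:ℂ), ((1/2:ℂ) + (1:ℂ)*i), (0:ℂ), (0:ℂ), (0:ℂ);
     ((-1/4:ℂ) + (1/4:ℂ)*i), ((-1/2:ℂ) + (-1/2:ℂ)*i), (0:ℂ), ((3/4:ℂ) + (1/4:ℂ)*i), ((1/2:ℂ) + (-1/2:ℂ)*i), (0:ℂ), (0:ℂ), (0:ℂ), ((1/2:ℂ)*i), (0:ℂ), (0:ℂ), (0:ℂ);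
     ((-1/2:ℂ)), ((-1:ℂ)*i), (0:ℂ), ((1/2:ℂ)*i), ((1:ℂ)), (0:ℂ), (0:ℂ), (0:ℂ), ((-1/2:ℂ) + (1/2:ℂ)*i), (0:ℂ), (0:ℂ), (0:ℂ)]

noncomputable def Rmat : Matrix (Fin 7) (Fin 5) ℂ :=
  !![((1:ℂ)), (0:ℂ), (0:ℂ), (0:ℂ), (0:ℂ);
     (0:ℂ), ((1:ℂ)), (0:ℂ), (0:ℂ), (0:ℂ);
     (0:ℂ), (0:ℂ), ((1:ℂ)), (0:ℂ), (0:ℂ);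
     (0:ℂ), (0:ℂ), (0:ℂ), ((1:ℂ)), (0:ℂ);
     (0:ℂ), (0:ℂ), (0:ℂ), (0:ℂ), ((1:ℂ));
     (0:ℂ), (0:ℂ), (0:ℂ), (0:ℂ), (0:ℂ);
     (0:ℂ), (0:ℂ), (0:ℂ), (0:ℂ), (0:ℂ)]

noncomputable def kv1 (i : ℂ) : Fin 7 → ℂ := ![((-1:ℂ)*i), (0:ℂ), ((-1:ℂ) + (-1:ℂ)*i), ((-1:ℂ)*i), ((1:ℂ) + (-1:ℂ)*i), ((1:ℂ)), (0:ℂ)]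
noncomputable def kv2 (i : ℂ) : Fin 7 → ℂ := ![((1:ℂ) + (1:ℂ)*i), ((1:ℂ) + (-1:ℂ)*i), ((3:ℂ) + (1:ℂ)*i), ((1:ℂ) + (1:ℂ)*i), ((2:ℂ)*i), (0:ℂ), ((2:ℂ))]


set_option maxHeartbeats 1000000 in
private lemma hker1 (i : ℂ) (hi : i ^ 2 = -1) :
    (alexD i i i i (-1) (-1) (-1)) *ᵥ (kv1 i) = 0 := by
  simp only [alexD, kv1, Matrix.cons_mulVec, Matrix.empty_mulVec, Matrix.cons_dotProduct,
    Matrix.dotProduct_of_isEmpty, Matrix.head_cons, Matrix.tail_cons, Matrix.empty_eq,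
    Matrix.cons_eq_zero_iff]
  refine ⟨?_, ?_, ?_, ?_, ?_, ?_, ?_, ?_, ?_, ?_, ?_, ?_, trivial⟩
  · linear_combination (((-1:ℂ))) * hi
  · linear_combination (((-2:ℂ))) * hi
  · linear_combination (((-1:ℂ) + (-1:ℂ)*i)) * hi
  · linear_combination (((-1:ℂ))) * hi
  · linear_combination (((-1:ℂ) + (-1:ℂ)*i)) * hi
  · linear_combination (((-1:ℂ) + (-2:ℂ)*i)) * hi
  · linear_combination (((-1:ℂ))) * hi
  · linear_combination (((-1:ℂ))) * hi
  · linear_combination (((-1:ℂ)*i)) * hi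
  · linear_combination (((-2:ℂ)*i)) * hi
  · linear_combination ((0:ℂ)) * hi
  · linear_combination (((-2:ℂ))) * hi

set_option maxHeartbeats 1000000 in
private lemma hker2 (i : ℂ) (hi : i ^ 2 = -1) :
    (alexD i i i i (-1) (-1) (-1)) *ᵥ (kv2 i) = 0 := by
  simp only [alexD, kv2, Matrix.cons_mulVec, Matrix.empty_mulVec, Matrix.cons_dotProduct,
    Matrix.dotProduct_of_isEmpty, Matrix.head_cons, Matrix.tail_cons, Matrix.empty_eq,
    Matrix.cons_eq_zero_iff]
  refine ⟨?_, ?_, ?_, ?_, ?_, ?_, ?_, ?_, ?_, ?_, ?_, ?_, trivial⟩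
  · linear_combination (((2:ℂ))) * hi
  · linear_combination (((4:ℂ))) * hi
  · linear_combination (((2:ℂ) + (2:ℂ)*i)) * hi
  · linear_combination (((2:ℂ))) * hi
  · linear_combination (((2:ℂ) + (2:ℂ)*i)) * hi
  · linear_combination (((2:ℂ) + (4:ℂ)*i)) * hi
  · linear_combination (((2:ℂ))) * hi
  · linear_combination (((2:ℂ))) * hi
  · linear_combination (((2:ℂ)*i)) * hi
  · linear_combination (((4:ℂ)*i)) * hi
  · linear_combination ((0:ℂ)) * hi
  · linear_combination (((4:ℂ))) * hi

set_option maxHeartbeats 2000000 in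
private lemma key_mul (i : ℂ) (hi : i ^ 2 = -1) :
    Lmat i * (alexD i i i i (-1) (-1) (-1) * Rmat) = 1 := by
  have hone : (1 : Matrix (Fin 5) (Fin 5) ℂ) =
      !![1,0,0,0,0; 0,1,0,0,0; 0,0,1,0,0; 0,0,0,1,0; 0,0,0,0,1] := by
    ext a b
    fin_cases a <;> fin_cases b <;> rfl
  rw [hone]
  ext a b
  fin_cases a <;> fin_cases b <;>
    simp [Lmat, Rmat, alexD, Matrix.mul_apply, Fin.sum_univ_succ, Matrix.vecHead,
      Matrix.vecTail, Function.comp]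
  all_goals first | linear_combination ((0:ℂ)) * hi | linear_combination (((-1/2:ℂ) + (-1/2:ℂ)*i)) * hi | linear_combination (((1/2:ℂ) + (1/2:ℂ)*i)) * hi | linear_combination (((-1/2:ℂ))) * hi | linear_combination (((1/2:ℂ))) * hi | linear_combination (((-3/2:ℂ) + (-1:ℂ)*i)) * hi | linear_combination (((3/2:ℂ) + (1:ℂ)*i)) * hi | linear_combination (((1/2:ℂ) + (-1/2:ℂ)*i)) * hi | linear_combination (((1/2:ℂ)*i)) * hi

private lemma rank_ge5 (i : ℂ) (hi : i ^ 2 = -1) :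
    5 ≤ (alexD i i i i (-1) (-1) (-1)).rank := by
  have h1 : (Lmat i * (alexD i i i i (-1) (-1) (-1) * Rmat)).rank = 5 := by
    rw [key_mul i hi]
    simp [Matrix.rank_one]
  calc (5 : ℕ) = (Lmat i * (alexD i i i i (-1) (-1) (-1) * Rmat)).rank := h1.symm
    _ ≤ (alexD i i i i (-1) (-1) (-1) * Rmat).rank := Matrix.rank_mul_le_right _ _
    _ ≤ (alexD i i i i (-1) (-1) (-1)).rank := Matrix.rank_mul_le_left _ _

private lemma rank_le5 (i : ℂ) (hi : i ^ 2 = -1) :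
    (alexD i i i i (-1) (-1) (-1)).rank ≤ 5 := by
  have hli : LinearIndependent ℂ ![kv1 i, kv2 i] := by
    rw [LinearIndependent.pair_iff]
    intro s t hst
    have h5 := congr_fun hst ((((((0 : Fin 2).succ).succ).succ).succ).succ)
    have h6 := congr_fun hst (((((((0 : Fin 1).succ).succ).succ).succ).succ).succ)
    simp only [kv1, kv2, Pi.add_apply, Pi.smul_apply, Matrix.cons_val_succ,
      Matrix.cons_val_zero, smul_eq_mul, Pi.zero_apply, mul_one, mul_zero,
      add_zero, zero_add] at h5 h6
    refine ⟨h5, ?_⟩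
    have h2 : (2 : ℂ) ≠ 0 := by norm_num
    exact (mul_eq_zero.mp h6).resolve_right h2
  have hsub : Submodule.span ℂ (Set.range ![kv1 i, kv2 i]) ≤
      LinearMap.ker (alexD i i i i (-1) (-1) (-1)).mulVecLin := by
    rw [Submodule.span_le]
    rintro _ ⟨j, rfl⟩
    fin_cases j
    · simp only [LinearMap.mem_ker, SetLike.mem_coe, Matrix.mulVecLin_apply,
        Matrix.cons_val_zero]
      exact hker1 i hi
    · simp only [LinearMap.mem_ker, SetLike.mem_coe, Matrix.mulVecLin_apply,
        Matrix.cons_val_one, Matrix.head_cons]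
      exact hker2 i hi
  have h2 : 2 ≤ Module.finrank ℂ
      (LinearMap.ker (alexD i i i i (-1) (-1) (-1)).mulVecLin) := by
    have := Submodule.finrank_mono hsub
    rwa [finrank_span_eq_card hli, Fintype.card_fin] at this
  have hrn := LinearMap.finrank_range_add_finrank_ker
    (alexD i i i i (-1) (-1) (-1)).mulVecLin
  rw [Module.finrank_fin_fun] at hrn
  have hdef : (alexD i i i i (-1) (-1) (-1)).rank =
      Module.finrank ℂ (LinearMap.range (alexD i i i i (-1) (-1) (-1)).mulVecLin) := rfl
  omega

/-- for a square root `i` of `−1`, the matrix `A(i,i,i,i,−1,−1,−1)`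
has rank exactly 5; hence the point `(i,i,i,i,−1,−1,−1,−1)` of the translated
torus `C` belongs to `V₁(D)` but not to `V₂(D)`. -/
theorem point_of_C_in_V1_not_V2 (i : ℂ) (hi : i ^ 2 = -1) :
    (alexD i i i i (-1) (-1) (-1)).rank = 5 ∧
    (![i, i, i, i, -1, -1, -1, -1] : Fin 8 → ℂ) ∈ VD 1 ∧
    (![i, i, i, i, -1, -1, -1, -1] : Fin 8 → ℂ) ∉ VD 2 := by
  have hi0 : i ≠ 0 := by
    intro h
    rw [h] at hi
    norm_num at hi
  have hrank : (alexD i i i i (-1) (-1) (-1)).rank = 5 :=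
    le_antisymm (rank_le5 i hi) (rank_ge5 i hi)
  refine ⟨hrank, ⟨?_, ?_, ?_⟩, ?_⟩
  · intro j
    fin_cases j <;> first
      | exact hi0
      | (norm_num)
  · show (alexD i i i i (-1) (-1) (-1)).rank < 7 - 1
    rw [hrank]
    norm_num
  · show i * i * i * i * (-1) * (-1) * (-1) * (-1) = 1
    linear_combination (i ^ 2 - 1) * hi
  · rintro ⟨-, h, -⟩
    have h5 : (alexD i i i i (-1) (-1) (-1)).rank < 7 - 2 := h
    rw [hrank] at h5
    norm_num at h5
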